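/- Let V, φ : ℝ^n → ℝ be continuous functions with V(y) ≥ 0 for all y and φ(y) > 0 for all y ≠ 0. Let x : [0, ∞) → ℝ^n be continuous, suppose x(t) → x* as t → ∞ for some x* ∈ ℝ^n, and suppose that for every t ≥ 0 the function s ↦ V(x(s)) has a right derivative at t which is ≤ −φ(x(t)). Then x* = 0. -/

import Mathlib

open Set

/-- **Convergence to the origin.** If `V ≥ 0` is continuous, `φ` is continuous
and positive away from the origin, `x` is a continuous trajectory converging to
`x*`, and `V ∘ x` has at every time `t ≥ 0` a right derivative at most
`-φ (x t)`, then `x* = 0`. -/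
theorem limit_is_origin
    (n : ℕ) (V φ : (Fin n → ℝ) → ℝ)
    (hV : Continuous V) (hφ : Continuous φ)
    (hVnonneg : ∀ y, 0 ≤ V y) (hφpos : ∀ y, y ≠ 0 → 0 < φ y)
    (x : ℝ → (Fin n → ℝ)) (hx : ContinuousOn x (Ici 0))
    (xstar : Fin n → ℝ)
    (hlim : Filter.Tendsto x Filter.atTop (nhds xstar))
    (hderiv : ∀ t : ℝ, 0 ≤ t →
      ∃ D : ℝ, HasDerivWithinAt (fun s => V (x s)) D (Ici t) t ∧ D ≤ -φ (x t)) :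
    xstar = 0 := by
  by_contra hne
  have hc : 0 < φ xstar / 2 := half_pos (hφpos _ hne)
  set c := φ xstar / 2 with hcdef
  -- eventually φ (x t) > c
  have htend : Filter.Tendsto (fun t => φ (x t)) Filter.atTop (nhds (φ xstar)) :=
    (hφ.continuousAt).tendsto.comp hlim
  have hev : ∀ᶠ t in Filter.atTop, c < φ (x t) :=
    htend.eventually (eventually_gt_nhds (half_lt_self (hφpos _ hne)))
  obtain ⟨T0, hT0⟩ := hev.exists_forall_of_atTop
  set T : ℝ := max T0 0 with hT
  have hT0' : (0:ℝ) ≤ T := le_max_right _ _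
  have hφT : ∀ t, T ≤ t → c ≤ φ (x t) := fun t ht =>
    (hT0 t (le_trans (le_max_left _ _) ht)).le
  -- choose the derivative function
  classical
  set f' : ℝ → ℝ := fun t => if h : 0 ≤ t then (hderiv t h).choose else 0 with hf'def
  have hf'spec : ∀ t, 0 ≤ t →
      HasDerivWithinAt (fun s => V (x s)) (f' t) (Ici t) t ∧ f' t ≤ -φ (x t) := by
    intro t ht
    simp only [hf'def, dif_pos ht]
    exact (hderiv t ht).choose_spec
  set b : ℝ := T + (V (x T) / c + 1) with hb
  have hTb : T ≤ b := by
    have : 0 ≤ V (x T) / c := div_nonneg (hVnonneg _) hc.le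
    rw [hb]; linarith
  have hcont : ContinuousOn (fun s => V (x s)) (Icc T b) := by
    apply hV.comp_continuousOn
    exact hx.mono fun s hs => le_trans hT0' hs.1
  have key : ∀ ⦃t⦄, t ∈ Icc T b → V (x t) ≤ V (x T) + (-c) * (t - T) := by
    apply image_le_of_deriv_right_le_deriv_boundary hcont
    · intro t ht
      exact (hf'spec t (le_trans hT0' ht.1)).1
    · simp
    · exact (continuous_const.add (continuous_const.mul (continuous_id.sub continuous_const))).continuousOn
    · intro t ht
      have := (((hasDerivWithinAt_id t (Ici t)).sub_const T).const_mul (-c)).const_add (V (x T))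
      simpa using this
    · intro t ht
      have h1 := (hf'spec t (le_trans hT0' ht.1)).2
      have h2 := hφT t ht.1
      linarith
  have hkey := key ⟨hTb, le_refl b⟩
  have : V (x b) < 0 := by
    have : (-c) * (b - T) = -(V (x T)) - c := by
      have e : c * (V (x T) / c) = V (x T) := by field_simp [hc.ne']
      rw [hb]; linear_combination -e
    nlinarith [hVnonneg (x b)]
  exact absurd this (not_lt.mpr (hVnonneg _))
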